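/- Gluing of two local star products (two-set case): Let U₁, U₂ be open sets covering M with a gauge transformation T₂₁ = Id + O(h) on U₁∩U₂ intertwining ⋆₁ and ⋆₂ (T₂₁(f) ⋆₂ T₂₁(g) = T₂₁(f ⋆₁ g)), and let φ₁ + φ₂ = 1 be a subordinate partition of unity. Define A₂₁ := φ₁·Id + φ₂·T₂₁ on U₁∩U₂. Then A₂₁ = Id + O(h) is invertible, and the formula f ⋆ g = A₂₁(A₂₁⁻¹(f) ⋆₁ A₂₁⁻¹(g)) on U₁∩U₂ (extended by ⋆₁ on U₁∖U₂ and ⋆₂ on U₂∖U₁) defines an associative product; moreover the analogous operator A₁₂ := φ₁T₁₂ + φ₂Id with T₁₂ = T₂₁⁻¹ satisfies A₂₁ = A₁₂ ∘ T₂₁, and the two glued products coincide on the overlap. (Algebraic core: for algebras B₁, B₂ with isomorphism T and idempotent-free convex combination A = φ₁Id + φ₂T with A invertible, the transported product A(A⁻¹f · A⁻¹g) is associative and independent of the choice between A₂₁ and A₁₂ up to the stated identity.) -/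

import Mathlib

open PowerSeries Finset

section Aux
variable {R : Type*} [CommRing R] [Algebra ℝ R]
variable (A : PowerSeries R →ₗ[ℝ] PowerSeries R)

/-- `N = Id - A`. -/
noncomputable def NN : PowerSeries R →ₗ[ℝ] PowerSeries R := LinearMap.id - A

lemma NN_apply (f : PowerSeries R) : NN A f = f - A f := rfl

lemma NNpow_succ (k : ℕ) (f : PowerSeries R) :
    (NN A ^ (k + 1)) f = NN A ((NN A ^ k) f) := by
  rw [pow_succ', Module.End.mul_apply]

lemma NNpow_succ' (k : ℕ) (f : PowerSeries R) :
    (NN A ^ (k + 1)) f = (NN A ^ k) (NN A f) := by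
  rw [pow_succ, Module.End.mul_apply]

variable (hAX : ∀ f, A (X * f) = X * A f)
  (hA0 : ∀ f, constantCoeff (R := R) (A f) = constantCoeff (R := R) f)

include hAX in
lemma NN_X (f : PowerSeries R) : NN A (X * f) = X * NN A f := by
  simp [NN_apply, hAX, mul_sub]

include hAX in
lemma NN_Xpow (k : ℕ) (f : PowerSeries R) : NN A (X ^ k * f) = X ^ k * NN A f := by
  induction k generalizing f with
  | zero => simp
  | succ n ih =>
    have h1 : (X : PowerSeries R) ^ (n + 1) * f = X * (X ^ n * f) := by ring
    have h2 : (X : PowerSeries R) * (X ^ n * NN A f) = X ^ (n + 1) * NN A f := by ring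
    rw [h1, NN_X A hAX, ih, h2]

include hA0 in
lemma X_dvd_NN (f : PowerSeries R) : (X : PowerSeries R) ∣ NN A f := by
  rw [X_dvd_iff]
  simp [NN_apply, hA0]

include hAX hA0 in
lemma Xpow_dvd_NNpow (k : ℕ) (f : PowerSeries R) :
    (X : PowerSeries R) ^ k ∣ (NN A ^ k) f := by
  induction k with
  | zero => simp
  | succ n ih =>
    obtain ⟨g, hg⟩ := ih
    rw [NNpow_succ, hg, NN_Xpow A hAX]
    obtain ⟨u, hu⟩ := X_dvd_NN A hA0 g
    rw [hu, pow_succ]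
    ring_nf
    exact Dvd.intro u rfl

include hAX hA0 in
lemma coeff_NN_congr {n : ℕ} {f g : PowerSeries R}
    (h : (X : PowerSeries R) ^ (n + 1) ∣ (f - g)) :
    coeff (R := R) n (NN A f) = coeff (R := R) n (NN A g) := by
  obtain ⟨u, hu⟩ := h
  have h2 : NN A f - NN A g = X ^ (n + 1) * NN A u := by
    rw [← map_sub, hu, NN_Xpow A hAX]
  have h3 : coeff (R := R) n (NN A f - NN A g) = 0 := by
    rw [h2]
    exact (X_pow_dvd_iff.mp ⟨NN A u, rfl⟩) n (Nat.lt_succ_self n)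
  rw [map_sub] at h3
  exact sub_eq_zero.mp h3

/-- Partial sum of the Neumann series. -/
noncomputable def PS (n : ℕ) (f : PowerSeries R) : PowerSeries R :=
  ∑ k ∈ range (n + 1), (NN A ^ k) f

/-- Candidate inverse of `A`. -/
noncomputable def BB (f : PowerSeries R) : PowerSeries R :=
  mk fun n => coeff (R := R) n (PS A n f)

lemma coeff_BB (n : ℕ) (f : PowerSeries R) :
    coeff (R := R) n (BB A f) = coeff (R := R) n (PS A n f) := coeff_mk _ _

include hAX hA0 in
lemma coeff_PS_stable {m n : ℕ} (h : m ≤ n) (f : PowerSeries R) :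
    coeff (R := R) m (PS A n f) = coeff (R := R) m (PS A m f) := by
  unfold PS
  rw [map_sum, map_sum]
  refine (Finset.sum_subset (by intro x hx; simp at hx ⊢; omega) ?_).symm
  intro k hk hk'
  simp only [mem_range] at hk hk'
  exact (X_pow_dvd_iff.mp (Xpow_dvd_NNpow A hAX hA0 k f)) m (by omega)

include hAX hA0 in
lemma BB_sub_PS (n : ℕ) (f : PowerSeries R) :
    (X : PowerSeries R) ^ (n + 1) ∣ (BB A f - PS A n f) := by
  rw [X_pow_dvd_iff]
  intro m hm
  rw [map_sub, coeff_BB, coeff_PS_stable A hAX hA0 (by omega) f, sub_eq_zero]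
  exact (coeff_PS_stable A hAX hA0 (by omega) f).symm

lemma tele (n : ℕ) (f : PowerSeries R) :
    PS A n f - NN A (PS A n f) = f - (NN A ^ (n + 1)) f := by
  have h1 : NN A (PS A n f) = ∑ k ∈ range (n + 1), (NN A ^ (k + 1)) f := by
    unfold PS
    rw [map_sum]
    exact Finset.sum_congr rfl fun k _ => (NNpow_succ A k f).symm
  rw [h1]
  unfold PS
  rw [← Finset.sum_sub_distrib]
  have := Finset.sum_range_sub' (fun k => (NN A ^ k) f) (n + 1)
  simpa using this

include hAX hA0 in
lemma A_BB (f : PowerSeries R) : A (BB A f) = f := by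
  ext n
  have hA : A (BB A f) = BB A f - NN A (BB A f) := by rw [NN_apply]; ring
  rw [hA, map_sub, coeff_BB,
    coeff_NN_congr A hAX hA0 (BB_sub_PS A hAX hA0 n f),
    ← map_sub, tele, map_sub]
  have : coeff (R := R) n ((NN A ^ (n + 1)) f) = 0 :=
    (X_pow_dvd_iff.mp (Xpow_dvd_NNpow A hAX hA0 (n + 1) f)) n (Nat.lt_succ_self n)
  rw [this, sub_zero]

include hAX hA0 in
lemma BB_A (f : PowerSeries R) : BB A (A f) = f := by
  ext n
  rw [coeff_BB]
  have hA : A f = f - NN A f := by rw [NN_apply]; ring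
  have h1 : PS A n (A f) = PS A n f - NN A (PS A n f) := by
    unfold PS
    rw [map_sum, ← Finset.sum_sub_distrib]
    refine Finset.sum_congr rfl fun k _ => ?_
    rw [hA, map_sub]
    congr 1
    rw [← NNpow_succ', NNpow_succ]
  rw [h1, tele, map_sub]
  have : coeff (R := R) n ((NN A ^ (n + 1)) f) = 0 :=
    (X_pow_dvd_iff.mp (Xpow_dvd_NNpow A hAX hA0 (n + 1) f)) n (Nat.lt_succ_self n)
  rw [this, sub_zero]

end Aux



open PowerSeries

/-- A star product on `R[[h]]`. -/
structure StarProduct (R : Type*) [CommRing R] [Algebra ℝ R] where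
  mul : PowerSeries R → PowerSeries R → PowerSeries R
  add_left : ∀ f g k, mul (f + g) k = mul f k + mul g k
  add_right : ∀ f g k, mul f (g + k) = mul f g + mul f k
  smul_left : ∀ (c : ℝ) f g, mul (c • f) g = c • mul f g
  smul_right : ∀ (c : ℝ) f g, mul f (c • g) = c • mul f g
  X_left : ∀ f g, mul (X * f) g = X * mul f g
  X_right : ∀ f g, mul f (X * g) = X * mul f g
  assoc : ∀ f g k, mul (mul f g) k = mul f (mul g k)
  mod_h : ∀ f g, constantCoeff (R := R) (mul f g) = constantCoeff (R := R) f * constantCoeff (R := R) g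

/-- `A₂₁ = φ₁·Id + φ₂·T₂₁`. -/
noncomputable def glueA21 {R : Type*} [CommRing R] [Algebra ℝ R] (φ₁ φ₂ : R)
    (T : PowerSeries R → PowerSeries R) (f : PowerSeries R) : PowerSeries R :=
  C (R := R) φ₁ * f + C (R := R) φ₂ * T f

/-- `A₁₂ = φ₁·T₁₂ + φ₂·Id`, where `T₁₂ = T₂₁⁻¹` (here `S`). -/
noncomputable def glueA12 {R : Type*} [CommRing R] [Algebra ℝ R] (φ₁ φ₂ : R)
    (S : PowerSeries R → PowerSeries R) (f : PowerSeries R) : PowerSeries R :=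
  C (R := R) φ₁ * S f + C (R := R) φ₂ * f

/-- Gluing of two local star products (algebraic core of the two-set case): with
`T₂₁ = Id + O(h)` intertwining `⋆₁` and `⋆₂` and `φ₁ + φ₂ = 1` a partition of unity,
the operator `A₂₁ = φ₁Id + φ₂T₂₁` is `Id + O(h)` and invertible, `A₂₁ = A₁₂ ∘ T₂₁`,
the transported product `f ⋆ g = A₂₁(A₂₁⁻¹(f) ⋆₁ A₂₁⁻¹(g))` is associative, and it
coincides with the product glued the other way, via `A₁₂` from `⋆₂`. -/
theorem stmt14 {R : Type*} [CommRing R] [Algebra ℝ R]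
    (s₁ s₂ : StarProduct R)
    (T S : PowerSeries R →ₗ[ℝ] PowerSeries R)
    (hST : ∀ f, S (T f) = f) (hTS : ∀ f, T (S f) = f)
    (hTX : ∀ f, T (X * f) = X * T f)
    (hTmod : ∀ f, constantCoeff (R := R) (T f) = constantCoeff (R := R) f)
    (hTR : ∀ (r : R) f, T (C (R := R) r * f) = C (R := R) r * T f)
    (hint : ∀ f g, T (s₁.mul f g) = s₂.mul (T f) (T g))
    (φ₁ φ₂ : R) (hpart : φ₁ + φ₂ = 1) :
    (∀ f, constantCoeff (R := R) (glueA21 φ₁ φ₂ T f) = constantCoeff (R := R) f) ∧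
    Function.Bijective (glueA21 φ₁ φ₂ T) ∧
    (∀ f, glueA12 φ₁ φ₂ S (T f) = glueA21 φ₁ φ₂ T f) ∧
    ∃ B B' : PowerSeries R → PowerSeries R,
      (∀ f, B (glueA21 φ₁ φ₂ T f) = f) ∧ (∀ f, glueA21 φ₁ φ₂ T (B f) = f) ∧
      (∀ f, B' (glueA12 φ₁ φ₂ S f) = f) ∧ (∀ f, glueA12 φ₁ φ₂ S (B' f) = f) ∧
      (∀ f g k,
        glueA21 φ₁ φ₂ T (s₁.mul (B (glueA21 φ₁ φ₂ T (s₁.mul (B f) (B g)))) (B k))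
          = glueA21 φ₁ φ₂ T (s₁.mul (B f) (B (glueA21 φ₁ φ₂ T (s₁.mul (B g) (B k)))))) ∧
      (∀ f g,
        glueA21 φ₁ φ₂ T (s₁.mul (B f) (B g))
          = glueA12 φ₁ φ₂ S (s₂.mul (B' f) (B' g))) := by
  classical
  set Alin : PowerSeries R →ₗ[ℝ] PowerSeries R :=
    { toFun := glueA21 φ₁ φ₂ T
      map_add' := by
        intro a b
        simp only [glueA21, map_add, mul_add]
        ring
      map_smul' := by
        intro c a
        simp only [glueA21, map_smul, RingHom.id_apply, mul_smul_comm, smul_add] } with hAlin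
  have hAapp : ∀ f, Alin f = glueA21 φ₁ φ₂ T f := fun f => rfl
  have hAX : ∀ f, Alin (X * f) = X * Alin f := by
    intro f
    simp only [hAapp, glueA21, hTX]
    ring
  have hA0 : ∀ f, constantCoeff (R := R) (Alin f) = constantCoeff (R := R) f := by
    intro f
    simp only [hAapp, glueA21, map_add, map_mul, constantCoeff_C, hTmod]
    rw [← add_mul, hpart, one_mul]
  have hBA : ∀ f, BB Alin (glueA21 φ₁ φ₂ T f) = f := fun f => BB_A Alin hAX hA0 f
  have hAB : ∀ f, glueA21 φ₁ φ₂ T (BB Alin f) = f := fun f => A_BB Alin hAX hA0 f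
  have hA12 : ∀ f, glueA12 φ₁ φ₂ S f = glueA21 φ₁ φ₂ T (S f) := by
    intro f; simp [glueA12, glueA21, hTS]
  refine ⟨fun f => hA0 f, ⟨?_, ?_⟩, ?_, BB Alin, T ∘ BB Alin, hBA, hAB, ?_, ?_, ?_, ?_⟩
  · intro a b hab
    have := congrArg (BB Alin) hab
    rwa [hBA, hBA] at this
  · intro a
    exact ⟨BB Alin a, hAB a⟩
  · intro f
    simp [glueA12, glueA21, hST]
  · intro f
    rw [Function.comp_apply, hA12, hBA, hTS]
  · intro f
    rw [Function.comp_apply, hA12, hST, hAB]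
  · intro f g k
    rw [hBA, hBA, s₁.assoc]
  · intro f g
    rw [hA12]
    congr 1
    rw [Function.comp_apply, Function.comp_apply, ← hint, hST]
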